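/- The Model I penalized objective f attains an absolute (global) minimum on (ℝⁿ)^k, i.e., there exists (x̄¹,…,x̄^k) ∈ (ℝⁿ)^k with f(x̄¹,…,x̄^k) ≤ f(x¹,…,x^k) for all x¹,…,x^k ∈ ℝⁿ. -/

import Mathlib

open scoped RealInnerProductSpace

/-- The support function `σ_F` of a set `F ⊆ ℝⁿ`. -/
noncomputable def suppF {n : ℕ} (F : Set (EuclideanSpace ℝ (Fin n)))
    (x : EuclideanSpace ℝ (Fin n)) : ℝ :=
  sSup ((fun y => ⟪x, y⟫) '' F)

/-- Minimum of finitely many real numbers indexed by `Fin m`, `m ≥ 1`. -/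
noncomputable def fmin {m : ℕ} (hm : 1 ≤ m) (α : Fin m → ℝ) : ℝ :=
  Finset.univ.inf' (Finset.univ_nonempty_iff.mpr ⟨⟨0, hm⟩⟩) α

/-- Maximum of finitely many real numbers indexed by `Fin m`, `m ≥ 1`. -/
noncomputable def fmax {m : ℕ} (hm : 1 ≤ m) (α : Fin m → ℝ) : ℝ :=
  Finset.univ.sup' (Finset.univ_nonempty_iff.mpr ⟨⟨0, hm⟩⟩) α

section Aux

variable {n : ℕ} {F : Set (EuclideanSpace ℝ (Fin n))}

lemma suppF_bddAbove {C : ℝ} (hC : ∀ y ∈ F, ‖y‖ ≤ C)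
    (x : EuclideanSpace ℝ (Fin n)) :
    BddAbove ((fun y => ⟪x, y⟫) '' F) := by
  refine ⟨‖x‖ * C, ?_⟩
  rintro _ ⟨y, hy, rfl⟩
  calc ⟪x, y⟫ ≤ ‖x‖ * ‖y‖ := real_inner_le_norm x y
    _ ≤ ‖x‖ * C := mul_le_mul_of_nonneg_left (hC y hy) (norm_nonneg x)

lemma le_suppF {C : ℝ} (hC : ∀ y ∈ F, ‖y‖ ≤ C)
    {x y : EuclideanSpace ℝ (Fin n)} (hy : y ∈ F) : ⟪x, y⟫ ≤ suppF F x :=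
  le_csSup (suppF_bddAbove hC x) ⟨y, hy, rfl⟩

lemma suppF_sub_le (hF : F.Nonempty) {C : ℝ} (hC : ∀ y ∈ F, ‖y‖ ≤ C)
    (x x' : EuclideanSpace ℝ (Fin n)) :
    suppF F x ≤ suppF F x' + C * ‖x - x'‖ := by
  apply csSup_le (hF.image _)
  rintro _ ⟨y, hy, rfl⟩
  have h1 : ⟪x - x', y⟫ ≤ C * ‖x - x'‖ := by
    calc ⟪x - x', y⟫ ≤ ‖x - x'‖ * ‖y‖ := real_inner_le_norm _ _
      _ ≤ ‖x - x'‖ * C := mul_le_mul_of_nonneg_left (hC y hy) (norm_nonneg _)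
      _ = C * ‖x - x'‖ := mul_comm _ _
  have h2 : ⟪x', y⟫ ≤ suppF F x' := le_suppF hC hy
  have key : x - x' + x' = x := sub_add_cancel x x'
  calc ⟪x, y⟫ = ⟪x - x' + x', y⟫ := by rw [key]
    _ = ⟪x - x', y⟫ + ⟪x', y⟫ := inner_add_left _ _ _
    _ ≤ C * ‖x - x'‖ + suppF F x' := add_le_add h1 h2
    _ = suppF F x' + C * ‖x - x'‖ := add_comm _ _

lemma suppF_continuous (hF : F.Nonempty) {C : ℝ} (hC : ∀ y ∈ F, 
    ‖y‖ ≤ C) (hC0 : 0 ≤ C) : Continuous (suppF F) := by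
  refine LipschitzWith.continuous (K := ⟨C, hC0⟩) ?_
  refine LipschitzWith.of_dist_le_mul fun x x' => ?_
  rw [Real.dist_eq, abs_sub_le_iff, dist_eq_norm]
  show suppF F x - suppF F x' ≤ C * ‖x - x'‖ ∧ suppF F x' - suppF F x ≤ C * ‖x - x'‖
  have h1 := suppF_sub_le hF hC x x'
  have h2 := suppF_sub_le hF hC x' x
  have h3 : ‖x' - x‖ = ‖x - x'‖ := norm_sub_rev _ _
  rw [h3] at h2
  constructor <;> linarith

lemma suppF_lower {r : ℝ} (hr : 0 < r) (hball : Metric.ball (0 : EuclideanSpace ℝ (Fin n)) r ⊆ F)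
    {C : ℝ} (hC : ∀ y ∈ F, ‖y‖ ≤ C)
    (x : EuclideanSpace ℝ (Fin n)) : (r / 2) * ‖x‖ ≤ suppF F x := by
  rcases eq_or_ne x 0 with rfl | hx
  · have h0 : (0 : EuclideanSpace ℝ (Fin n)) ∈ F := hball (by simp [hr])
    have := le_suppF hC (x := (0 : EuclideanSpace ℝ (Fin n))) h0
    simpa using this
  · have hxn : 0 < ‖x‖ := norm_pos_iff.mpr hx
    set y : EuclideanSpace ℝ (Fin n) := ((r / 2) / ‖x‖) • x with hy
    have hyF : y ∈ F := by
      apply hball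
      rw [Metric.mem_ball, dist_zero_right, hy, norm_smul]
      have : ‖(r / 2) / ‖x‖‖ = (r / 2) / ‖x‖ := abs_of_pos (by positivity)
      rw [this, div_mul_cancel₀ _ (ne_of_gt hxn)]
      linarith
    have := le_suppF hC (x := x) hyF
    have hinner : ⟪x, y⟫ = (r / 2) * ‖x‖ := by
      rw [hy, real_inner_smul_right, real_inner_self_eq_norm_sq]
      field_simp
    linarith [hinner ▸ this]

end Aux

theorem stmt_10 {n m k : ℕ} (hm : 1 ≤ m) (hk : 1 ≤ k)
    (a : Fin m → EuclideanSpace ℝ (Fin n))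
    (F : Set (EuclideanSpace ℝ (Fin n)))
    (hF : F.Nonempty) (hFc : IsClosed F) (hFb : Bornology.IsBounded F)
    (hFconv : Convex ℝ F) (hF0 : (0 : EuclideanSpace ℝ (Fin n)) ∈ interior F)
    (lam : ℝ) (hlam : 0 < lam) :
    ∃ Xbar : Fin k → EuclideanSpace ℝ (Fin n),
      ∀ X : Fin k → EuclideanSpace ℝ (Fin n),
        ∑ i, fmin hk (fun ℓ => suppF F (Xbar ℓ - a i))
            + fmin hm (fun i => ∑ ℓ, suppF F (Xbar ℓ - a i))
            + lam * ∑ ℓ, fmin hm (fun i => suppF F (Xbar ℓ - a i))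
          ≤ ∑ i, fmin hk (fun ℓ => suppF F (X ℓ - a i))
            + fmin hm (fun i => ∑ ℓ, suppF F (X ℓ - a i))
            + lam * ∑ ℓ, fmin hm (fun i => suppF F (X ℓ - a i)) := by
  classical
  -- bound on F
  obtain ⟨C₀, hC₀⟩ := hFb.subset_closedBall 0
  set C : ℝ := max C₀ 0 with hCdef
  have hC0 : (0 : ℝ) ≤ C := le_max_right _ _
  have hC : ∀ y ∈ F, ‖y‖ ≤ C := fun y hy => by
    have := hC₀ hy
    rw [Metric.mem_closedBall, dist_zero_right] at this
    exact this.trans (le_max_left _ _)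
  -- small ball inside F
  obtain ⟨r, hr, hball⟩ : ∃ r > 0, Metric.ball (0 : EuclideanSpace ℝ (Fin n)) r ⊆ F := by
    have : F ∈ nhds (0 : EuclideanSpace ℝ (Fin n)) := mem_interior_iff_mem_nhds.mp hF0
    exact Metric.mem_nhds_iff.mp this
  set r' : ℝ := r / 2 with hr'def
  have hr' : 0 < r' := by positivity
  have hlow : ∀ x, r' * ‖x‖ ≤ suppF F x := suppF_lower hr hball hC
  have hnonneg : ∀ x, 0 ≤ suppF F x := fun x =>
    le_trans (by positivity) (hlow x)
  -- the objective function
  set f : (Fin k → EuclideanSpace ℝ (Fin n)) → ℝ := fun X =>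
    ∑ i, fmin hk (fun ℓ => suppF F (X ℓ - a i))
      + fmin hm (fun i => ∑ ℓ, suppF F (X ℓ - a i))
      + lam * ∑ ℓ, fmin hm (fun i => suppF F (X ℓ - a i)) with hfdef
  have hsc : Continuous (suppF F) := suppF_continuous hF hC hC0
  have hcomp : ∀ (i : Fin m) (ℓ : Fin k),
      Continuous (fun X : Fin k → EuclideanSpace ℝ (Fin n) => suppF F (X ℓ - a i)) :=
    fun i ℓ => hsc.comp ((continuous_apply ℓ).sub continuous_const)
  have hfcont : Continuous f := by
    apply Continuous.add
    apply Continuous.add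
    · exact continuous_finset_sum _ fun i _ =>
        Continuous.finset_inf'_apply _ fun ℓ _ => hcomp i ℓ
    · exact Continuous.finset_inf'_apply _ fun i _ =>
        continuous_finset_sum _ fun ℓ _ => hcomp i ℓ
    · exact continuous_const.mul (continuous_finset_sum _ fun ℓ _ =>
        Continuous.finset_inf'_apply _ fun i _ => hcomp i ℓ)
  -- nonnegativity of f
  have hfmin_nonneg : ∀ {p : ℕ} (hp : 1 ≤ p) (α : Fin p → ℝ),
      (∀ j, 0 ≤ α j) → 0 ≤ fmin hp α := by
    intro p hp α hα
    exact Finset.le_inf' _ _ fun j _ => hα j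
  have hf_nonneg : ∀ X, 0 ≤ f X := by
    intro X
    have h1 : 0 ≤ ∑ i, fmin hk (fun ℓ => suppF F (X ℓ - a i)) :=
      Finset.sum_nonneg fun i _ => hfmin_nonneg hk _ fun ℓ => hnonneg _
    have h2 : 0 ≤ fmin hm (fun i => ∑ ℓ, suppF F (X ℓ - a i)) :=
      hfmin_nonneg hm _ fun i => Finset.sum_nonneg fun ℓ _ => hnonneg _
    have h3 : 0 ≤ lam * ∑ ℓ, fmin hm (fun i => suppF F (X ℓ - a i)) :=
      mul_nonneg hlam.le (Finset.sum_nonneg fun ℓ _ =>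
        hfmin_nonneg hm _ fun i => hnonneg _)
    simp only [hfdef]
    linarith
  -- the key coercivity bound: f X ≥ r' * (‖X ℓ₀‖ - A) for each ℓ₀
  set A : ℝ := fmax hm (fun i => ‖a i‖) with hAdef
  have hA : ∀ i, ‖a i‖ ≤ A := fun i => by
    simp only [hAdef, fmax]
    exact Finset.le_sup' (fun i => ‖a i‖) (Finset.mem_univ i)
  have hA0 : 0 ≤ A := le_trans (norm_nonneg _) (hA ⟨0, hm⟩)
  have hcoer : ∀ (X : Fin k → EuclideanSpace ℝ (Fin n)) (ℓ₀ : Fin k),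
      r' * (‖X ℓ₀‖ - A) ≤ f X := by
    intro X ℓ₀
    have hstep : r' * (‖X ℓ₀‖ - A) ≤ fmin hm (fun i => ∑ ℓ, suppF F (X ℓ - a i)) := by
      apply Finset.le_inf'
      intro i _
      have h1 : suppF F (X ℓ₀ - a i) ≤ ∑ ℓ, suppF F (X ℓ - a i) :=
        Finset.single_le_sum (f := fun ℓ => suppF F (X ℓ - a i))
          (fun ℓ _ => hnonneg _) (Finset.mem_univ ℓ₀)
      have h2 : r' * ‖X ℓ₀ - a i‖ ≤ suppF F (X ℓ₀ - a i) := hlow _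
      have h3 : ‖X ℓ₀‖ - A ≤ ‖X ℓ₀ - a i‖ := by
        have := norm_sub_norm_le (X ℓ₀) (a i)
        have := hA i
        linarith
      nlinarith
    have h1' : 0 ≤ ∑ i, fmin hk (fun ℓ => suppF F (X ℓ - a i)) :=
      Finset.sum_nonneg fun i _ => hfmin_nonneg hk _ fun ℓ => hnonneg _
    have h3' : 0 ≤ lam * ∑ ℓ, fmin hm (fun i => suppF F (X ℓ - a i)) :=
      mul_nonneg hlam.le (Finset.sum_nonneg fun ℓ _ =>
        hfmin_nonneg hm _ fun i => hnonneg _)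
    simp only [hfdef]
    linarith
  -- choose radius
  set X₀ : Fin k → EuclideanSpace ℝ (Fin n) := fun _ => 0 with hX₀def
  set R : ℝ := A + f X₀ / r' + 1 with hRdef
  have hR0 : 0 ≤ R := by
    have := hf_nonneg X₀
    have : 0 ≤ f X₀ / r' := by positivity
    simp only [hRdef]; linarith
  -- minimize over the closed ball
  have hcpt : IsCompact (Metric.closedBall (0 : Fin k → EuclideanSpace ℝ (Fin n)) R) :=
    isCompact_closedBall _ _
  have hne : (Metric.closedBall (0 : Fin k → EuclideanSpace ℝ (Fin n)) R).Nonempty :=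
    ⟨0, by simpa using hR0⟩
  obtain ⟨Xbar, hXmem, hXmin⟩ := hcpt.exists_isMinOn hne hfcont.continuousOn
  refine ⟨Xbar, fun X => ?_⟩
  have hgoal : f Xbar ≤ f X := by
    by_cases hX : ∀ ℓ, ‖X ℓ‖ ≤ R
    · apply hXmin
      rw [Metric.mem_closedBall, dist_zero_right]
      exact pi_norm_le_iff_of_nonneg hR0 |>.mpr hX
    · push_neg at hX
      obtain ⟨ℓ₀, hℓ₀⟩ := hX
      have hX₀mem : X₀ ∈ Metric.closedBall (0 : Fin k → EuclideanSpace ℝ (Fin n)) R := by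
        have hX0 : X₀ = 0 := rfl
        rw [Metric.mem_closedBall, hX0, dist_self]
        exact hR0
      have h1 : f Xbar ≤ f X₀ := hXmin hX₀mem
      have h2 : r' * (‖X ℓ₀‖ - A) ≤ f X := hcoer X ℓ₀
      have h3 : f X₀ < r' * (‖X ℓ₀‖ - A) := by
        have hRA : f X₀ / r' + 1 < ‖X ℓ₀‖ - A := by
          simp only [hRdef] at hℓ₀; linarith
        have := (div_lt_iff₀ hr').mp (lt_of_lt_of_le (lt_add_of_pos_right _ one_pos) hRA.le)
        calc f X₀ = (f X₀ / r') * r' := by field_simp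
          _ < (‖X ℓ₀‖ - A) * r' := by
            apply mul_lt_mul_of_pos_right _ hr'
            linarith
          _ = r' * (‖X ℓ₀‖ - A) := mul_comm _ _
      linarith
  simpa only [hfdef] using hgoal
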